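/- For all natural numbers n ≥ 0, the factor complexity of the Thue–Morse sequence satisfies f_t(16n+1) = 3·f_t(8n+2) − f_t(8n+4) (as an identity of integers). -/
import Mathlib


/-- The Thue–Morse sequence: `tm n` is the parity of the number of 1s in the
binary representation of `n`. -/
def tm (n : ℕ) : ℕ := (Nat.digits 2 n).sum % 2

/-- The factor complexity of the Thue–Morse sequence: the number of distinct
blocks of length `n` occurring in it. -/
noncomputable def tmComplexity (n : ℕ) : ℕ :=
  Set.ncard {w : Fin n → ℕ | ∃ i : ℕ, ∀ j : Fin n, w j = tm (i + j)}

namespace TMAux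

lemma tm_lt_two (n : ℕ) : tm n < 2 := Nat.mod_lt _ (by norm_num)
lemma tm_zero : tm 0 = 0 := by simp [tm]

lemma tm_double (n : ℕ) : tm (2 * n) = tm n := by
  rcases Nat.eq_zero_or_pos n with rfl | hn
  · simp [tm]
  · unfold tm
    rw [Nat.digits_def' (by norm_num : 1 < 2) (by omega)]
    simp [Nat.mul_div_cancel_left, Nat.mul_mod_right]

lemma tm_double_add_one (n : ℕ) : tm (2 * n + 1) = 1 - tm n := by
  unfold tm
  rw [Nat.digits_def' (by norm_num : 1 < 2) (by omega)]
  have h1 : (2 * n + 1) % 2 = 1 := by omega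
  have h2 : (2 * n + 1) / 2 = n := by omega
  rw [h1, h2]
  simp only [List.sum_cons]
  omega

lemma tm_one : tm 1 = 1 := by
  have h := tm_double_add_one 0; rw [tm_zero] at h; norm_num at h; exact h
lemma tm_two : tm 2 = 1 := by
  have h := tm_double 1; rw [tm_one] at h; norm_num at h; exact h
lemma tm_three : tm 3 = 0 := by
  have h := tm_double_add_one 1; rw [tm_one] at h; norm_num at h; exact h
lemma tm_four : tm 4 = 1 := by
  have h := tm_double 2; rw [tm_two] at h; norm_num at h; exact h
lemma tm_five : tm 5 = 0 := by
  have h := tm_double_add_one 2; rw [tm_two] at h; norm_num at h; exact h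
lemma tm_six : tm 6 = 0 := by
  have h := tm_double 3; rw [tm_three] at h; norm_num at h; exact h
lemma tm_seven : tm 7 = 1 := by
  have h := tm_double_add_one 3; rw [tm_three] at h; norm_num at h; exact h

lemma no_three (i : ℕ) : ¬ (tm i = tm (i+1) ∧ tm (i+1) = tm (i+2)) := by
  rcases Nat.even_or_odd i with ⟨k, hk⟩ | ⟨k, hk⟩
  · have h1 : tm (2*k) = tm k := tm_double k
    have h2 : tm (2*k+1) = 1 - tm k := tm_double_add_one k
    have h3 := tm_lt_two k
    subst hk
    rw [show k + k = 2*k by ring]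
    omega
  · have h1 : tm (2*(k+1)) = tm (k+1) := tm_double (k+1)
    have h2 : tm (2*(k+1)+1) = 1 - tm (k+1) := tm_double_add_one (k+1)
    have h3 := tm_lt_two (k+1)
    subst hk
    rw [show 2*k+1+1 = 2*(k+1) by ring, show 2*k+1+2 = 2*(k+1)+1 by ring]
    omega

def win (n : ℕ) (i : ℕ) : Fin n → ℕ := fun j => tm (i + j)

lemma tmComplexity_eq (n : ℕ) : tmComplexity n = (Set.range (win n)).ncard := by
  unfold tmComplexity
  congr 1
  ext w
  constructor
  · rintro ⟨i, hi⟩; exact ⟨i, (funext fun j => (hi j).symm)⟩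
  · rintro ⟨i, rfl⟩; exact ⟨i, fun j => rfl⟩

lemma finite_range (n : ℕ) : (Set.range (win n)).Finite := by
  have h : Set.range (win n) ⊆ Set.pi Set.univ (fun _ : Fin n => ({0,1} : Set ℕ)) := by
    rintro w ⟨i, rfl⟩ j _
    have := tm_lt_two (i + (j : ℕ))
    simp only [win, Set.mem_insert_iff, Set.mem_singleton_iff]
    omega
  exact (Set.Finite.pi (fun _ => (Set.finite_singleton 1).insert 0)).subset h

lemma range_split (N : ℕ) :
    Set.range (win N) =
      Set.range (fun k => win N (2*k)) ∪ Set.range (fun k => win N (2*k+1)) := by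
  ext w
  simp only [Set.mem_range, Set.mem_union]
  constructor
  · rintro ⟨i, rfl⟩
    rcases Nat.even_or_odd i with ⟨k, hk⟩ | ⟨k, hk⟩
    · exact Or.inl ⟨k, by rw [show 2*k = i by omega]⟩
    · exact Or.inr ⟨k, by rw [show 2*k+1 = i by omega]⟩
  · rintro (⟨k, rfl⟩ | ⟨k, rfl⟩) <;> exact ⟨_, rfl⟩

lemma ncard_range_eq_of_compress {N M : ℕ} (g : ℕ → ℕ) (Φ : (Fin N → ℕ) → (Fin M → ℕ))
    (hcomp : ∀ k, Φ (win N (g k)) = win M k)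
    (hinj : ∀ k k', win M k = win M k' → win N (g k) = win N (g k')) :
    (Set.range (fun k => win N (g k))).ncard = (Set.range (win M)).ncard := by
  have himg : Φ '' Set.range (fun k => win N (g k)) = Set.range (win M) := by
    rw [← Set.range_comp]
    exact congrArg Set.range (funext hcomp)
  have hinjOn : Set.InjOn Φ (Set.range (fun k => win N (g k))) := by
    rintro _ ⟨k, rfl⟩ _ ⟨k', rfl⟩ h
    exact hinj k k' (by rw [← hcomp k, ← hcomp k', h])
  rw [← himg, Set.ncard_image_of_injOn hinjOn]

lemma four_shift (k k' : ℕ)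
    (h0 : tm (2*k + 0) = tm (2*k' + 1 + 0))
    (h1 : tm (2*k + 1) = tm (2*k' + 1 + 1))
    (h2 : tm (2*k + 2) = tm (2*k' + 1 + 2))
    (h3 : tm (2*k + 3) = tm (2*k' + 1 + 3)) : False := by
  have a0 : tm (2*k + 0) = tm k := by rw [show 2*k + 0 = 2*k by ring, tm_double]
  have a1 : tm (2*k + 1) = 1 - tm k := tm_double_add_one k
  have a2 : tm (2*k + 2) = tm (k+1) := by rw [show 2*k + 2 = 2*(k+1) by ring, tm_double]
  have a3 : tm (2*k + 3) = 1 - tm (k+1) := by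
    rw [show 2*k + 3 = 2*(k+1) + 1 by ring, tm_double_add_one]
  have b0 : tm (2*k' + 1 + 0) = 1 - tm k' := by
    rw [show 2*k' + 1 + 0 = 2*k' + 1 by ring, tm_double_add_one]
  have b1 : tm (2*k' + 1 + 1) = tm (k'+1) := by
    rw [show 2*k' + 1 + 1 = 2*(k'+1) by ring, tm_double]
  have b2 : tm (2*k' + 1 + 2) = 1 - tm (k'+1) := by
    rw [show 2*k' + 1 + 2 = 2*(k'+1) + 1 by ring, tm_double_add_one]
  have b3 : tm (2*k' + 1 + 3) = tm (k'+2) := by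
    rw [show 2*k' + 1 + 3 = 2*(k'+2) by ring, tm_double]
  have c1 := tm_lt_two k
  have c2 := tm_lt_two (k+1)
  have c3 := tm_lt_two k'
  have c4 := tm_lt_two (k'+1)
  have c5 := tm_lt_two (k'+2)
  have := no_three k'
  omega

lemma disj_ranges (N : ℕ) (hN : 4 ≤ N) :
    Disjoint (Set.range (fun k => win N (2*k))) (Set.range (fun k => win N (2*k+1))) := by
  rw [Set.disjoint_left]
  rintro w ⟨k, rfl⟩ ⟨k', hk'⟩
  have h : win N (2*k) = win N (2*k'+1) := hk'.symm
  have H : ∀ s : ℕ, s < N → tm (2*k + s) = tm (2*k' + 1 + s) := fun s hs =>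
    congrFun h ⟨s, hs⟩
  exact four_shift k k' (H 0 (by omega)) (H 1 (by omega)) (H 2 (by omega)) (H 3 (by omega))

-- even windows of length 2m ↦ factors of length m
lemma ncard_even_a (m : ℕ) :
    (Set.range (fun k => win (2*m) (2*k))).ncard = (Set.range (win m)).ncard := by
  apply ncard_range_eq_of_compress (fun k => 2*k)
    (fun w (j : Fin m) => w ⟨2*(j : ℕ), by omega⟩)
  · intro k
    funext j
    show tm (2*k + 2*(j:ℕ)) = tm (k + (j:ℕ))
    rw [show 2*k + 2*(j:ℕ) = 2*(k + (j:ℕ)) by ring, tm_double]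
  · intro k k' h
    have hval : ∀ s, s < m → tm (k + s) = tm (k' + s) := fun s hs => congrFun h ⟨s, hs⟩
    funext j
    show tm (2*k + (j:ℕ)) = tm (2*k' + (j:ℕ))
    rcases Nat.even_or_odd (j : ℕ) with ⟨s, hs⟩ | ⟨s, hs⟩
    · have hsM : s < m := by have := j.2; omega
      rw [hs, show 2*k + (s+s) = 2*(k+s) by ring, show 2*k' + (s+s) = 2*(k'+s) by ring,
        tm_double, tm_double]
      exact hval s hsM
    · have hsM : s < m := by have := j.2; omega
      rw [hs, show 2*k + (2*s+1) = 2*(k+s) + 1 by ring,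
        show 2*k' + (2*s+1) = 2*(k'+s) + 1 by ring, tm_double_add_one, tm_double_add_one,
        hval s hsM]

-- odd windows of length 2m ↦ factors of length m+1 (m ≥ 2)
lemma ncard_odd_a (m : ℕ) (hm : 2 ≤ m) :
    (Set.range (fun k => win (2*m) (2*k+1))).ncard = (Set.range (win (m+1))).ncard := by
  apply ncard_range_eq_of_compress (fun k => 2*k+1)
    (fun w (j : Fin (m+1)) =>
      if (j : ℕ) = 0 then 1 - w ⟨0, by omega⟩ else w ⟨2*(j:ℕ) - 1, by have := j.2; omega⟩)
  · intro k
    funext j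
    by_cases h0 : (j : ℕ) = 0
    · simp only [h0, if_pos]
      show 1 - tm (2*k+1 + 0) = tm (k + (j:ℕ))
      rw [h0]
      simp only [Nat.add_zero]
      rw [tm_double_add_one]
      have := tm_lt_two k
      omega
    · simp only [h0, if_neg, if_false]
      show tm (2*k+1 + (2*(j:ℕ) - 1)) = tm (k + (j:ℕ))
      rw [show 2*k+1 + (2*(j:ℕ) - 1) = 2*(k + (j:ℕ)) by omega, tm_double]
  · intro k k' h
    have hval : ∀ s, s < m+1 → tm (k + s) = tm (k' + s) := fun s hs => congrFun h ⟨s, hs⟩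
    funext j
    show tm (2*k+1 + (j:ℕ)) = tm (2*k'+1 + (j:ℕ))
    rcases Nat.even_or_odd (j : ℕ) with ⟨s, hs⟩ | ⟨s, hs⟩
    · have hsM : s < m+1 := by have := j.2; omega
      rw [hs, show 2*k+1 + (s+s) = 2*(k+s) + 1 by ring,
        show 2*k'+1 + (s+s) = 2*(k'+s) + 1 by ring, tm_double_add_one, tm_double_add_one,
        hval s hsM]
    · have hsM : s + 1 < m+1 := by have := j.2; omega
      rw [hs, show 2*k+1 + (2*s+1) = 2*(k+(s+1)) by ring,
        show 2*k'+1 + (2*s+1) = 2*(k'+(s+1)) by ring, tm_double, tm_double,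
        hval (s+1) hsM]

-- even windows of length 2m+1 ↦ factors of length m+1
lemma ncard_even_b (m : ℕ) :
    (Set.range (fun k => win (2*m+1) (2*k))).ncard = (Set.range (win (m+1))).ncard := by
  apply ncard_range_eq_of_compress (fun k => 2*k)
    (fun w (j : Fin (m+1)) => w ⟨2*(j:ℕ), by have := j.2; omega⟩)
  · intro k
    funext j
    show tm (2*k + 2*(j:ℕ)) = tm (k + (j:ℕ))
    rw [show 2*k + 2*(j:ℕ) = 2*(k + (j:ℕ)) by ring, tm_double]
  · intro k k' h
    have hval : ∀ s, s < m+1 → tm (k + s) = tm (k' + s) := fun s hs => congrFun h ⟨s, hs⟩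
    funext j
    show tm (2*k + (j:ℕ)) = tm (2*k' + (j:ℕ))
    rcases Nat.even_or_odd (j : ℕ) with ⟨s, hs⟩ | ⟨s, hs⟩
    · have hsM : s < m+1 := by have := j.2; omega
      rw [hs, show 2*k + (s+s) = 2*(k+s) by ring, show 2*k' + (s+s) = 2*(k'+s) by ring,
        tm_double, tm_double]
      exact hval s hsM
    · have hsM : s < m+1 := by have := j.2; omega
      rw [hs, show 2*k + (2*s+1) = 2*(k+s) + 1 by ring,
        show 2*k' + (2*s+1) = 2*(k'+s) + 1 by ring, tm_double_add_one, tm_double_add_one,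
        hval s hsM]

-- odd windows of length 2m+1 ↦ factors of length m+1
lemma ncard_odd_b (m : ℕ) :
    (Set.range (fun k => win (2*m+1) (2*k+1))).ncard = (Set.range (win (m+1))).ncard := by
  apply ncard_range_eq_of_compress (fun k => 2*k+1)
    (fun w (j : Fin (m+1)) => 1 - w ⟨2*(j:ℕ), by have := j.2; omega⟩)
  · intro k
    funext j
    show 1 - tm (2*k+1 + 2*(j:ℕ)) = tm (k + (j:ℕ))
    rw [show 2*k+1 + 2*(j:ℕ) = 2*(k + (j:ℕ)) + 1 by ring, tm_double_add_one]
    have := tm_lt_two (k + (j:ℕ))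
    omega
  · intro k k' h
    have hval : ∀ s, s < m+1 → tm (k + s) = tm (k' + s) := fun s hs => congrFun h ⟨s, hs⟩
    funext j
    show tm (2*k+1 + (j:ℕ)) = tm (2*k'+1 + (j:ℕ))
    rcases Nat.even_or_odd (j : ℕ) with ⟨s, hs⟩ | ⟨s, hs⟩
    · have hsM : s < m+1 := by have := j.2; omega
      rw [hs, show 2*k+1 + (s+s) = 2*(k+s) + 1 by ring,
        show 2*k'+1 + (s+s) = 2*(k'+s) + 1 by ring, tm_double_add_one, tm_double_add_one,
        hval s hsM]
    · have hsM : s + 1 < m+1 := by have := j.2; omega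
      rw [hs, show 2*k+1 + (2*s+1) = 2*(k+(s+1)) by ring,
        show 2*k'+1 + (2*s+1) = 2*(k'+(s+1)) by ring, tm_double, tm_double,
        hval (s+1) hsM]

lemma sub_finite {N : ℕ} (g : ℕ → ℕ) : (Set.range (fun k => win N (g k))).Finite :=
  (finite_range N).subset (by rintro w ⟨k, rfl⟩; exact ⟨g k, rfl⟩)

lemma rec_even (m : ℕ) (hm : 2 ≤ m) :
    tmComplexity (2*m) = tmComplexity m + tmComplexity (m+1) := by
  rw [tmComplexity_eq, tmComplexity_eq, tmComplexity_eq, range_split (2*m),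
    Set.ncard_union_eq (disj_ranges (2*m) (by omega)) (sub_finite _) (sub_finite _),
    ncard_even_a, ncard_odd_a m hm]

lemma rec_odd (m : ℕ) (hm : 2 ≤ m) :
    tmComplexity (2*m+1) = 2 * tmComplexity (m+1) := by
  rw [tmComplexity_eq, tmComplexity_eq, range_split (2*m+1),
    Set.ncard_union_eq (disj_ranges (2*m+1) (by omega)) (sub_finite _) (sub_finite _),
    ncard_even_b, ncard_odd_b]
  ring

lemma win_two_eq (i : ℕ) : win 2 i = ![tm i, tm (i+1)] := by
  funext j
  fin_cases j <;> simp [win]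

lemma win_three_eq (i : ℕ) : win 3 i = ![tm i, tm (i+1), tm (i+2)] := by
  funext j
  fin_cases j <;> simp [win]

lemma p_one : tmComplexity 1 = 2 := by
  rw [tmComplexity_eq]
  have hset : Set.range (win 1) = {fun _ => 0, fun _ => 1} := by
    ext w
    simp only [Set.mem_range, Set.mem_insert_iff, Set.mem_singleton_iff]
    constructor
    · rintro ⟨i, rfl⟩
      have hb := tm_lt_two i
      rcases (show tm i = 0 ∨ tm i = 1 by omega) with h | h
      · left; funext j
        have hj : (j : ℕ) = 0 := by have := j.isLt; omega
        show tm (i + (j:ℕ)) = 0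
        rw [hj, Nat.add_zero, h]
      · right; funext j
        have hj : (j : ℕ) = 0 := by have := j.isLt; omega
        show tm (i + (j:ℕ)) = 1
        rw [hj, Nat.add_zero, h]
    · rintro (rfl | rfl)
      · exact ⟨0, funext fun j => by
          have hj : (j : ℕ) = 0 := by have := j.isLt; omega
          show tm (0 + (j:ℕ)) = 0
          rw [hj, tm_zero]⟩
      · exact ⟨1, funext fun j => by
          have hj : (j : ℕ) = 0 := by have := j.isLt; omega
          show tm (1 + (j:ℕ)) = 1
          rw [hj, Nat.add_zero, tm_one]⟩
  rw [hset, Set.ncard_pair]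
  intro h
  have := congrFun h 0
  norm_num at this

lemma p_two : tmComplexity 2 = 4 := by
  rw [tmComplexity_eq]
  have hset : Set.range (win 2) = ({![0,0],![0,1],![1,0],![1,1]} : Set (Fin 2 → ℕ)) := by
    ext w
    simp only [Set.mem_range, Set.mem_insert_iff, Set.mem_singleton_iff]
    constructor
    · rintro ⟨i, rfl⟩
      rw [win_two_eq]
      have hb1 := tm_lt_two i
      have hb2 := tm_lt_two (i+1)
      rcases (show tm i = 0 ∨ tm i = 1 by omega) with hx | hx <;>
        rcases (show tm (i+1) = 0 ∨ tm (i+1) = 1 by omega) with hy | hy <;>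
        rw [hx, hy] <;> simp
    · rintro (rfl | rfl | rfl | rfl)
      · exact ⟨5, by rw [win_two_eq]; norm_num [tm_five, tm_six]⟩
      · exact ⟨0, by rw [win_two_eq]; norm_num [tm_zero, tm_one]⟩
      · exact ⟨2, by rw [win_two_eq]; norm_num [tm_two, tm_three]⟩
      · exact ⟨1, by rw [win_two_eq]; norm_num [tm_one, tm_two]⟩
  rw [hset, show ({![0,0],![0,1],![1,0],![1,1]} : Set (Fin 2 → ℕ)) =
    (↑({![0,0],![0,1],![1,0],![1,1]} : Finset (Fin 2 → ℕ)) : Set (Fin 2 → ℕ)) by simp,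
    Set.ncard_coe_finset]
  decide

lemma p_three : tmComplexity 3 = 6 := by
  rw [tmComplexity_eq]
  have hset : Set.range (win 3) =
      ({![0,0,1],![0,1,0],![0,1,1],![1,0,0],![1,0,1],![1,1,0]} : Set (Fin 3 → ℕ)) := by
    ext w
    simp only [Set.mem_range, Set.mem_insert_iff, Set.mem_singleton_iff]
    constructor
    · rintro ⟨i, rfl⟩
      rw [win_three_eq]
      have hb1 := tm_lt_two i
      have hb2 := tm_lt_two (i+1)
      have hb3 := tm_lt_two (i+2)
      have h3 := no_three i
      rcases (show tm i = 0 ∨ tm i = 1 by omega) with hx | hx <;>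
        rcases (show tm (i+1) = 0 ∨ tm (i+1) = 1 by omega) with hy | hy <;>
        rcases (show tm (i+2) = 0 ∨ tm (i+2) = 1 by omega) with hz | hz <;>
        first
          | exact absurd ⟨by omega, by omega⟩ h3
          | (rw [hx, hy, hz]; simp)
    · rintro (rfl | rfl | rfl | rfl | rfl | rfl)
      · exact ⟨5, by rw [win_three_eq]; norm_num [tm_five, tm_six, tm_seven]⟩
      · exact ⟨3, by rw [win_three_eq]; norm_num [tm_three, tm_four, tm_five]⟩
      · exact ⟨0, by rw [win_three_eq]; norm_num [tm_zero, tm_one, tm_two]⟩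
      · exact ⟨4, by rw [win_three_eq]; norm_num [tm_four, tm_five, tm_six]⟩
      · exact ⟨2, by rw [win_three_eq]; norm_num [tm_two, tm_three, tm_four]⟩
      · exact ⟨1, by rw [win_three_eq]; norm_num [tm_one, tm_two, tm_three]⟩
  rw [hset, show ({![0,0,1],![0,1,0],![0,1,1],![1,0,0],![1,0,1],![1,1,0]} : Set (Fin 3 → ℕ)) =
    (↑({![0,0,1],![0,1,0],![0,1,1],![1,0,0],![1,0,1],![1,1,0]} : Finset (Fin 3 → ℕ)) :
      Set (Fin 3 → ℕ)) by simp,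
    Set.ncard_coe_finset]
  decide

end TMAux

theorem stmt_17 (n : ℕ) :
    (tmComplexity (16 * n + 1) : ℤ) =
      3 * tmComplexity (8 * n + 2) - tmComplexity (8 * n + 4) := by
  open TMAux in
  rcases Nat.eq_zero_or_pos n with rfl | hn
  · have h4 : tmComplexity 4 = tmComplexity 2 + tmComplexity 3 := by
      have h := rec_even 2 le_rfl
      norm_num at h
      exact h
    have h1 := p_one
    have h2 := p_two
    have h3 := p_three
    norm_num
    omega
  · have e1 : tmComplexity (16*n+1) = 2 * tmComplexity (8*n+1) := by
      rw [show 16*n+1 = 2*(8*n)+1 by ring]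
      exact rec_odd (8*n) (by omega)
    have e2 : tmComplexity (8*n+1) = 2 * tmComplexity (4*n+1) := by
      rw [show 8*n+1 = 2*(4*n)+1 by ring]
      have := rec_odd (4*n) (by omega)
      rw [show 4*n+1 = 4*n+1 by ring] at this
      exact this
    have e3 : tmComplexity (4*n+1) = 2 * tmComplexity (2*n+1) := by
      rw [show 4*n+1 = 2*(2*n)+1 by ring]
      exact rec_odd (2*n) (by omega)
    have e4 : tmComplexity (8*n+2) = tmComplexity (4*n+1) + tmComplexity (4*n+2) := by
      rw [show 8*n+2 = 2*(4*n+1) by ring]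
      have := rec_even (4*n+1) (by omega)
      rw [show 4*n+1+1 = 4*n+2 by ring] at this
      exact this
    have e5 : tmComplexity (4*n+2) = tmComplexity (2*n+1) + tmComplexity (2*n+2) := by
      rw [show 4*n+2 = 2*(2*n+1) by ring]
      have := rec_even (2*n+1) (by omega)
      rw [show 2*n+1+1 = 2*n+2 by ring] at this
      exact this
    have e6 : tmComplexity (8*n+4) = tmComplexity (4*n+2) + tmComplexity (4*n+3) := by
      rw [show 8*n+4 = 2*(4*n+2) by ring]
      have := rec_even (4*n+2) (by omega)
      rw [show 4*n+2+1 = 4*n+3 by ring] at this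
      exact this
    have e7 : tmComplexity (4*n+3) = 2 * tmComplexity (2*n+2) := by
      rw [show 4*n+3 = 2*(2*n+1)+1 by ring]
      have := rec_odd (2*n+1) (by omega)
      rw [show 2*n+1+1 = 2*n+2 by ring] at this
      exact this
    omega
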